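/- Let σ > 0, let m₁, m₂ be real numbers, and let α ∈ (1, ∞). Then the Rényi divergence of order α between the one-dimensional Gaussian measures N(m₁, σ²) and N(m₂, σ²) equals α·(m₁ − m₂)²/(2σ²). In particular, the Gaussian mechanism with noise scale σ applied to a query of L₂-sensitivity Sen = |m₁ − m₂| satisfies (α, α·Sen²/(2σ²))-RDP. -/

import Mathlib

open MeasureTheory ProbabilityTheory Real
open scoped ENNReal NNReal

lemma gauss_pointwise (v : NNReal) (hv : 0 < (v : ℝ)) (m₁ m₂ α x : ℝ) :
    gaussianPDFReal m₂ v x *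
        (gaussianPDFReal m₁ v x / gaussianPDFReal m₂ v x) ^ α =
      Real.exp (α * (α - 1) * (m₁ - m₂) ^ 2 / (2 * v)) *
        gaussianPDFReal (α * m₁ + (1 - α) * m₂) v x := by
  have hvne : (v : ℝ) ≠ 0 := hv.ne'
  have hs : ((Real.sqrt (2 * Real.pi * v))⁻¹ : ℝ) ≠ 0 := by
    have : (0:ℝ) < Real.sqrt (2 * Real.pi * v) := Real.sqrt_pos.2 (by positivity)
    positivity
  simp only [gaussianPDFReal]
  rw [mul_div_mul_left _ _ hs, ← Real.exp_sub, ← Real.exp_mul]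
  rw [mul_assoc ((Real.sqrt (2 * Real.pi * v))⁻¹), ← Real.exp_add]
  have : -(x - m₂) ^ 2 / (2 * (v:ℝ)) +
        (-(x - m₁) ^ 2 / (2 * (v:ℝ)) - -(x - m₂) ^ 2 / (2 * (v:ℝ))) * α =
      α * (α - 1) * (m₁ - m₂) ^ 2 / (2 * (v:ℝ)) +
        -(x - (α * m₁ + (1 - α) * m₂)) ^ 2 / (2 * (v:ℝ)) := by
    field_simp
    ring
  rw [this, Real.exp_add]
  ring

theorem renyiDiv_gaussianReal' (σ : NNReal) (hσ : 0 < σ) (m₁ m₂ : ℝ) (α : ℝ) (hα : 1 < α) :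
    (α - 1)⁻¹ * Real.log (∫ x, (((gaussianReal m₁ (σ ^ 2)).rnDeriv (gaussianReal m₂ (σ ^ 2)) x).toReal) ^ α ∂(gaussianReal m₂ (σ ^ 2))) =
      α * (m₁ - m₂) ^ 2 / (2 * (σ : ℝ) ^ 2) := by
  set v : NNReal := σ ^ 2 with hv_def
  have hv : v ≠ 0 := by positivity
  have hvpos : 0 < (v : ℝ) := by positivity
  set f : ℝ → ℝ≥0∞ := gaussianPDF m₁ v with hf_def
  set g : ℝ → ℝ≥0∞ := gaussianPDF m₂ v with hg_def
  have hgm : Measurable g := measurable_gaussianPDF m₂ v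
  have hfm : Measurable f := measurable_gaussianPDF m₁ v
  have hhm : Measurable (fun x => f x / g x) := hfm.div hgm
  have hgx : ∀ x, g x ≠ 0 ∧ g x ≠ ∞ := by
    intro x
    constructor
    · simp only [hg_def, gaussianPDF, ne_eq, ENNReal.ofReal_eq_zero, not_le]
      exact gaussianPDFReal_pos m₂ v x hv
    · exact ENNReal.ofReal_ne_top
  -- μ = ν.withDensity (f/g)
  have hmu : gaussianReal m₁ v = (gaussianReal m₂ v).withDensity (fun x => f x / g x) := by
    rw [gaussianReal_of_var_ne_zero m₁ hv, gaussianReal_of_var_ne_zero m₂ hv,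
      ← withDensity_mul volume hgm hhm]
    congr 1
    funext x
    exact (ENNReal.mul_div_cancel (hgx x).1 (hgx x).2).symm
  have hrn : (gaussianReal m₁ v).rnDeriv (gaussianReal m₂ v)
      =ᵐ[gaussianReal m₂ v] fun x => f x / g x := by
    rw [hmu]
    exact Measure.rnDeriv_withDensity _ hhm
  have hint1 : ∫ x, (((gaussianReal m₁ v).rnDeriv (gaussianReal m₂ v) x).toReal) ^ α
        ∂(gaussianReal m₂ v)
      = ∫ x, ((f x / g x).toReal) ^ α ∂(gaussianReal m₂ v) := by
    refine integral_congr_ae ?_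
    filter_upwards [hrn] with x hx
    rw [hx]
  have htoReal : ∀ x, ((f x / g x).toReal) ^ α
      = (gaussianPDFReal m₁ v x / gaussianPDFReal m₂ v x) ^ α := by
    intro x
    rw [ENNReal.toReal_div]
    simp only [hf_def, hg_def, gaussianPDF,
      ENNReal.toReal_ofReal (gaussianPDFReal_nonneg _ _ _)]
  have hνw : gaussianReal m₂ v
      = volume.withDensity (fun x => ((gaussianPDFReal m₂ v x).toNNReal : ℝ≥0∞)) := by
    rw [gaussianReal_of_var_ne_zero m₂ hv]
    rfl
  have hmeasNN : Measurable fun x => (gaussianPDFReal m₂ v x).toNNReal :=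
    (measurable_gaussianPDFReal m₂ v).real_toNNReal
  have hint2 : ∫ x, ((f x / g x).toReal) ^ α ∂(gaussianReal m₂ v)
      = ∫ x, gaussianPDFReal m₂ v x *
          (gaussianPDFReal m₁ v x / gaussianPDFReal m₂ v x) ^ α := by
    rw [hνw, integral_withDensity_eq_integral_smul hmeasNN]
    refine integral_congr_ae (ae_of_all _ fun x => ?_)
    simp only [htoReal x, NNReal.smul_def, Real.coe_toNNReal _ (gaussianPDFReal_nonneg _ _ _),
      smul_eq_mul]
  have hint3 : ∫ x, gaussianPDFReal m₂ v x *
          (gaussianPDFReal m₁ v x / gaussianPDFReal m₂ v x) ^ α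
      = Real.exp (α * (α - 1) * (m₁ - m₂) ^ 2 / (2 * v)) := by
    have := gauss_pointwise v hvpos m₁ m₂ α
    calc ∫ x, gaussianPDFReal m₂ v x *
            (gaussianPDFReal m₁ v x / gaussianPDFReal m₂ v x) ^ α
        = ∫ x, Real.exp (α * (α - 1) * (m₁ - m₂) ^ 2 / (2 * v)) *
            gaussianPDFReal (α * m₁ + (1 - α) * m₂) v x := by
          refine integral_congr_ae (ae_of_all _ fun x => ?_)
          exact this x
      _ = Real.exp (α * (α - 1) * (m₁ - m₂) ^ 2 / (2 * v)) := by
          rw [integral_const_mul, integral_gaussianPDFReal_eq_one _ hv, mul_one]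
  rw [hint1, hint2, hint3, Real.log_exp]
  have hα1 : α - 1 ≠ 0 := by linarith
  have hvne : (v : ℝ) ≠ 0 := hvpos.ne'
  have hcoe : (v : ℝ) = (σ : ℝ) ^ 2 := by
    simp [hv_def]
  rw [hcoe] at *
  field_simp


/-- The Rényi divergence of order `α` between measures `μ` and `ν`:
`D_α(μ ‖ ν) = (1/(α-1)) * log ∫ (dμ/dν)^α dν`. -/
noncomputable def renyiDiv {Ω : Type*} [MeasurableSpace Ω] (α : ℝ) (μ ν : Measure Ω) : ℝ :=
  (α - 1)⁻¹ * Real.log (∫ x, ((μ.rnDeriv ν x).toReal) ^ α ∂ν)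

/-- **Rényi divergence between Gaussians of equal variance.**
For `σ > 0`, means `m₁, m₂` and `α ∈ (1, ∞)`,
`D_α(N(m₁, σ²) ‖ N(m₂, σ²)) = α (m₁ - m₂)² / (2 σ²)`; in particular the Gaussian
mechanism with noise scale `σ` at sensitivity `|m₁ - m₂|` is `(α, α |m₁-m₂|²/(2σ²))`-RDP. -/
theorem renyiDiv_gaussianReal (σ : NNReal) (hσ : 0 < σ) (m₁ m₂ : ℝ) (α : ℝ) (hα : 1 < α) :
    renyiDiv α (gaussianReal m₁ (σ ^ 2)) (gaussianReal m₂ (σ ^ 2)) =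
      α * (m₁ - m₂) ^ 2 / (2 * (σ : ℝ) ^ 2) := by
  rw [renyiDiv]
  exact renyiDiv_gaussianReal' σ hσ m₁ m₂ α hα
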